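/- Let γ ∈ [1/2, 1), T a finite set, R₁ : T → ℝ a function whose discounted return G₁(ξ) = ∑_j γ^j R₁(ξ_j) is non-constant on T^ℕ, and α ≠ 0 a real constant. Then there is no function R₂ : T → ℝ whose discounted return G₂ satisfies G₂(ξ) = -exp(α · G₁(ξ)) for all ξ ∈ T^ℕ. -/

import Mathlib

/-- No Markovian reward realizes an exponential utility of a non-constant return. -/
theorem stmt_4 (γ : ℝ) (hγ : 1/2 ≤ γ) (hγ1 : γ < 1)
    (T : Type*) [Fintype T]
    (R₁ : T → ℝ) (α : ℝ) (hα : α ≠ 0)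
    (hnc : ¬ ∀ ξ ξ' : ℕ → T,
      (∑' j : ℕ, γ^j * R₁ (ξ j)) = ∑' j : ℕ, γ^j * R₁ (ξ' j)) :
    ¬ ∃ R₂ : T → ℝ, ∀ ξ : ℕ → T,
      (∑' j : ℕ, γ^j * R₂ (ξ j)) = -Real.exp (α * ∑' j : ℕ, γ^j * R₁ (ξ j)) := by
  rintro ⟨R₂, hR₂⟩
  push_neg at hnc
  obtain ⟨ξ, ξ', hne⟩ := hnc
  have hγ0 : (0:ℝ) ≤ γ := le_trans (by norm_num) hγ
  have hγne : γ ≠ 0 := fun h => by rw [h] at hγ; norm_num at hγ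
  -- summability of discounted returns
  have hsum : ∀ (R : T → ℝ) (ζ : ℕ → T), Summable (fun j : ℕ => γ^j * R (ζ j)) := by
    intro R ζ
    have hg : Summable (fun j : ℕ => (∑ t, |R t|) * γ^j) :=
      (summable_geometric_of_lt_one hγ0 hγ1).mul_left _
    refine Summable.of_norm_bounded hg ?_
    intro j
    have hb : |R (ζ j)| ≤ ∑ t, |R t| :=
      Finset.single_le_sum (f := fun t => |R t|) (fun t _ => abs_nonneg _) (Finset.mem_univ _)
    rw [Real.norm_eq_abs, abs_mul, abs_pow, abs_of_nonneg hγ0]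
    exact le_trans (mul_le_mul_of_nonneg_left hb (pow_nonneg hγ0 j)) (le_of_eq (mul_comm _ _))
  -- prepending a state
  have hcons : ∀ (R : T → ℝ) (t : T) (ζ : ℕ → T),
      (∑' j : ℕ, γ^j * R ((fun n => Nat.casesOn n t ζ) j))
        = R t + γ * ∑' j : ℕ, γ^j * R (ζ j) := by
    intro R t ζ
    rw [Summable.tsum_eq_zero_add (hsum R _)]
    simp only [pow_zero, one_mul]
    congr 1
    rw [← tsum_mul_left]
    refine tsum_congr fun j => ?_
    simp only [pow_succ]
    ring
  set x := ∑' j : ℕ, γ^j * R₁ (ξ j) with hx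
  set y := ∑' j : ℕ, γ^j * R₁ (ξ' j) with hy
  -- key identity
  have key : ∀ (t : T) (ζ : ℕ → T),
      R₂ t = γ * Real.exp (α * ∑' j : ℕ, γ^j * R₁ (ζ j))
        - Real.exp (α * R₁ t) * Real.exp (α * γ * ∑' j : ℕ, γ^j * R₁ (ζ j)) := by
    intro t ζ
    have h1 := hR₂ (fun n => Nat.casesOn n t ζ)
    rw [hcons R₂ t ζ, hcons R₁ t ζ, hR₂ ζ] at h1
    have h2 : Real.exp (α * (R₁ t + γ * ∑' j : ℕ, γ^j * R₁ (ζ j)))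
        = Real.exp (α * R₁ t) * Real.exp (α * γ * ∑' j : ℕ, γ^j * R₁ (ζ j)) := by
      rw [← Real.exp_add]; congr 1; ring
    rw [h2] at h1
    linarith [h1]
  have hAne : Real.exp (α * γ * x) - Real.exp (α * γ * y) ≠ 0 := by
    intro h
    have : α * γ * x = α * γ * y := Real.exp_injective (by linarith)
    exact hne (mul_left_cancel₀ (mul_ne_zero hα hγne) this)
  -- R₁ is constant
  have hconst : ∀ t : T, R₁ t = R₁ (ξ 0) := by
    intro t
    have h1 : Real.exp (α * R₁ t) * (Real.exp (α * γ * x) - Real.exp (α * γ * y))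
        = γ * (Real.exp (α * x) - Real.exp (α * y)) := by
      have := (key t ξ).symm.trans (key t ξ')
      rw [← hx, ← hy] at this
      linear_combination -this
    have h2 : Real.exp (α * R₁ (ξ 0)) * (Real.exp (α * γ * x) - Real.exp (α * γ * y))
        = γ * (Real.exp (α * x) - Real.exp (α * y)) := by
      have := (key (ξ 0) ξ).symm.trans (key (ξ 0) ξ')
      rw [← hx, ← hy] at this
      linear_combination -this
    have h3 : Real.exp (α * R₁ t) = Real.exp (α * R₁ (ξ 0)) :=
      mul_right_cancel₀ hAne (h1.trans h2.symm)
    exact mul_left_cancel₀ hα (Real.exp_injective h3)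
  exact hne (tsum_congr fun j => by rw [hconst (ξ j), hconst (ξ' j)])
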